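/- If G is an upper-critical graph and e = xy is an edge of G, then the graph G/e obtained by contracting e is also upper-critical. -/

import Mathlib

open SimpleGraph

/-- A graph is *upper-critical* if adding any edge between two distinct
non-adjacent vertices strictly increases the chromatic number. -/
def UpperCritical {V : Type*} (G : SimpleGraph V) : Prop :=
  ∀ x y : V, x ≠ y → ¬G.Adj x y →
    G.chromaticNumber < (G ⊔ SimpleGraph.edge x y).chromaticNumber

/-- In an upper-critical finite graph, non-adjacency is transitive. -/
lemma uc_nonadj_trans {W : Type*} [Fintype W] (K : SimpleGraph W)
    (hUC : UpperCritical K) :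
    ∀ a b c : W, ¬K.Adj a b → ¬K.Adj b c → ¬K.Adj a c := by
  classical
  intro a b c hab hbc hac
  rcases eq_or_ne a b with rfl | hab' ; · exact hbc hac
  rcases eq_or_ne b c with rfl | hbc' ; · exact hab hac
  rcases eq_or_ne a c with rfl | hac' ; · exact K.loopless.irrefl a hac
  set n := K.chromaticNumber.toNat with hn
  have hne : K.chromaticNumber ≠ ⊤ := by
    rw [chromaticNumber_ne_top_iff_exists]
    exact ⟨_, K.colorable_of_fintype⟩
  have hχ : (n : ℕ∞) = K.chromaticNumber := ENat.coe_toNat hne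
  have hcol : K.Colorable n := by
    rw [← chromaticNumber_le_iff_colorable, ← hχ]
  obtain ⟨C⟩ := hcol
  have samecolor : ∀ u v : W, u ≠ v → ¬K.Adj u v → C u = C v := by
    intro u v huv hnadj
    by_contra hCuv
    have C' : (K ⊔ SimpleGraph.edge u v).Coloring (Fin n) := by
      refine Coloring.mk C ?_
      intro p q hpq
      rcases hpq with h | h
      · exact C.valid h
      · rw [edge_adj] at h
        rcases h.1 with ⟨rfl, rfl⟩ | ⟨rfl, rfl⟩
        · exact hCuv
        · exact fun e => hCuv e.symm
    have hle : (K ⊔ SimpleGraph.edge u v).chromaticNumber ≤ n :=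
      Colorable.chromaticNumber_le ⟨C'⟩
    have := hUC u v huv hnadj
    rw [← hχ] at this
    exact absurd (lt_of_lt_of_le this hle) (lt_irrefl _)
  have h1 := samecolor a b hab' hab
  have h2 := samecolor b c hbc' hbc
  exact C.valid hac (h1.trans h2)

/-- A finite graph in which non-adjacency is transitive (i.e. a complete
multipartite graph) is upper-critical. -/
lemma multipartite_uc {W : Type*} [Fintype W] (K : SimpleGraph W)
    (htr : ∀ a b c : W, ¬K.Adj a b → ¬K.Adj b c → ¬K.Adj a c) :
    UpperCritical K := by
  classical
  intro a b hab hna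
  let s : Setoid W :=
    ⟨fun u v => ¬K.Adj u v,
      ⟨fun u => K.loopless.irrefl u, fun h h' => h h'.symm, fun h h' => htr _ _ _ h h'⟩⟩
  let Q := Quotient s
  haveI : Fintype Q := Fintype.ofFinite Q
  set k := Fintype.card Q with hk
  have hcol : K.Colorable k := by
    have C : K.Coloring Q := by
      refine Coloring.mk (Quotient.mk s) ?_
      intro u v h heq
      exact (Quotient.eq.mp heq : ¬K.Adj u v) h
    exact C.colorable
  have hle : K.chromaticNumber ≤ k := hcol.chromaticNumber_le
  let rep : Q → W := fun q => if q = (⟦a⟧ : Q) then a else q.out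
  have hrepmem : ∀ q : Q, (⟦rep q⟧ : Q) = q := by
    intro q
    by_cases h : q = (⟦a⟧ : Q)
    · simp [rep, h]
    · simp [rep, h, Quotient.out_eq]
  have hrepinj : Function.Injective rep := by
    intro p q h
    rw [← hrepmem p, ← hrepmem q, h]
  have hba : (⟦b⟧ : Q) = (⟦a⟧ : Q) := Quotient.sound (fun h => hna h.symm)
  have hadjrep : ∀ p q : Q, p ≠ q → K.Adj (rep p) (rep q) := by
    intro p q hpq
    by_contra h
    exact hpq (by rw [← hrepmem p, ← hrepmem q]; exact Quotient.sound h)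
  have hbnot : b ∉ Finset.univ.image rep := by
    simp only [Finset.mem_image, Finset.mem_univ, true_and, not_exists]
    intro q hq
    have h1 : q = (⟦b⟧ : Q) := by rw [← hrepmem q, hq]
    rw [h1, hba] at hq
    have : rep (⟦a⟧ : Q) = a := by simp [rep]
    exact hab (this ▸ hq)
  let t : Finset W := insert b (Finset.univ.image rep)
  have hcard : t.card = k + 1 := by
    rw [Finset.card_insert_of_notMem hbnot,
      Finset.card_image_of_injective _ hrepinj, Finset.card_univ]
  have hbq : ∀ q : Q, (K ⊔ SimpleGraph.edge a b).Adj (rep q) b := by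
    intro q
    by_cases h : q = (⟦a⟧ : Q)
    · have : rep q = a := by simp [rep, h]
      rw [this]
      exact Or.inr ((edge_adj a b a b).mpr ⟨Or.inl ⟨rfl, rfl⟩, hab⟩)
    · refine Or.inl ?_
      by_contra hadj
      exact h (by rw [← hrepmem q]; exact (Quotient.sound hadj).trans hba)
  have hclique : (K ⊔ SimpleGraph.edge a b).IsNClique (k + 1) t := by
    constructor
    · intro u hu v hv huv
      simp only [t, Finset.coe_insert, Set.mem_insert_iff, Finset.coe_image,
        Finset.mem_coe, Set.mem_image, Finset.mem_image, Finset.mem_univ, true_and,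
        Finset.coe_univ, Set.image_univ, Set.mem_range] at hu hv
      rcases hu with rfl | ⟨p, rfl⟩
      · rcases hv with rfl | ⟨q, rfl⟩
        · exact absurd rfl huv
        · exact (hbq q).symm
      · rcases hv with rfl | ⟨q, rfl⟩
        · exact hbq p
        · exact Or.inl (hadjrep p q (fun h => huv (by rw [h])))
    · exact hcard
  have hnc : ¬(K ⊔ SimpleGraph.edge a b).Colorable k := by
    intro hc
    exact hc.cliqueFree (lt_add_one k) t hclique
  have hgt : (k : ℕ∞) < (K ⊔ SimpleGraph.edge a b).chromaticNumber := by
    by_contra h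
    exact hnc (chromaticNumber_le_iff_colorable.mp (not_lt.mp h))
  exact lt_of_le_of_lt hle hgt

theorem stmt_7 {V : Type*} [Fintype V] (G : SimpleGraph V) (hUC : UpperCritical G)
    (x y : V) (hadj : G.Adj x y)
    (H : SimpleGraph {v : V // v ≠ x})
    -- `H` is the contraction `G/xy`: the vertex `y` plays the role of the merged
    -- vertex `z`, with `N(z) = (N(x) ∪ N(y)) \ {x, y}`.
    (hH : ∀ a b : {v : V // v ≠ x}, H.Adj a b ↔
      (((a : V) = y ∧ (b : V) ≠ y ∧ (G.Adj x b ∨ G.Adj y b)) ∨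
       ((b : V) = y ∧ (a : V) ≠ y ∧ (G.Adj x a ∨ G.Adj y a)) ∨
       ((a : V) ≠ y ∧ (b : V) ≠ y ∧ G.Adj a b))) :
    UpperCritical H := by
  classical
  haveI : Fintype {v : V // v ≠ x} := Fintype.ofFinite _
  have T := uc_nonadj_trans G hUC
  apply multipartite_uc
  intro a b c hab hbc hac
  rcases (hH a c).1 hac with ⟨hay, hcy, hxc⟩ | ⟨hcy, hay, hxa⟩ | ⟨hay, hcy, hGac⟩
  · by_cases hby : (b : V) = y
    · have e : a = b := Subtype.ext (hay.trans hby.symm)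
      exact hbc (by rw [← e]; exact hac)
    · have h1 : ¬G.Adj x b := fun h => hab ((hH a b).2 (Or.inl ⟨hay, hby, Or.inl h⟩))
      have h2 : ¬G.Adj y b := fun h => hab ((hH a b).2 (Or.inl ⟨hay, hby, Or.inr h⟩))
      have h3 : ¬G.Adj b c := fun h => hbc ((hH b c).2 (Or.inr (Or.inr ⟨hby, hcy, h⟩)))
      rcases hxc with h | h
      · exact T x b c h1 h3 h
      · exact T y b c h2 h3 h
  · by_cases hby : (b : V) = y
    · have e : b = c := Subtype.ext (hby.trans hcy.symm)
      exact hab (by rw [e]; exact hac)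
    · have h1 : ¬G.Adj x b := fun h => hbc ((hH b c).2 (Or.inr (Or.inl ⟨hcy, hby, Or.inl h⟩)))
      have h2 : ¬G.Adj y b := fun h => hbc ((hH b c).2 (Or.inr (Or.inl ⟨hcy, hby, Or.inr h⟩)))
      have h3 : ¬G.Adj a b := fun h => hab ((hH a b).2 (Or.inr (Or.inr ⟨hay, hby, h⟩)))
      rcases hxa with h | h
      · exact T x b a h1 (fun h' => h3 h'.symm) h
      · exact T y b a h2 (fun h' => h3 h'.symm) h
  · by_cases hby : (b : V) = y
    · have h1 : ¬G.Adj x a := fun h => hab ((hH a b).2 (Or.inr (Or.inl ⟨hby, hay, Or.inl h⟩)))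
      have h3 : ¬G.Adj x c := fun h => hbc ((hH b c).2 (Or.inl ⟨hby, hcy, Or.inl h⟩))
      exact T a x c (fun h => h1 h.symm) h3 hGac
    · have h1 : ¬G.Adj a b := fun h => hab ((hH a b).2 (Or.inr (Or.inr ⟨hay, hby, h⟩)))
      have h2 : ¬G.Adj b c := fun h => hbc ((hH b c).2 (Or.inr (Or.inr ⟨hby, hcy, h⟩)))
      exact T a b c h1 h2 hGac
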